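/- Let D be a proper subdomain of a Banach space with (D, k_D) a (μ₀, ρ₀)-Rips space (with 0 < λ ≤ 1/2 and λ ≤ ρ₀). Let γ₁, γ₂ be λ-curves in D, x ∈ γ₁ ∩ γ₂, y on γ₁ after x, z on γ₂ after x, and suppose k_D(y,z) ≤ τ. Then for every w ∈ γ₁[x,y] there exists u ∈ γ₂[x,z] with k_D(w,u) ≤ μ₀ + 2λ + τ. -/
import Mathlib


open Set Metric MeasureTheory

noncomputable section

variable {E : Type*} [NormedAddCommGroup E]

/-- Distance from a point to the boundary (= complement) of `D`. -/
def dB (D : Set E) (z : E) : ℝ := Metric.infDist z Dᶜ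

/-- `D` is a proper subdomain of the ambient space. -/
def IsProperDomain (D : Set E) : Prop := IsOpen D ∧ IsConnected D ∧ Dᶜ.Nonempty

/-- A rectifiable arc inside `D`, parametrized by arclength on `[a,b]`. -/
structure IsArc (D : Set E) (γ : ℝ → E) (a b : ℝ) : Prop where
  le : a ≤ b
  lip : LipschitzOnWith 1 γ (Set.Icc a b)
  unit : ∀ s t, s ∈ Set.Icc a b → t ∈ Set.Icc a b → s ≤ t →
    eVariationOn γ (Set.Icc s t) = ENNReal.ofReal (t - s)
  mem : ∀ t ∈ Set.Icc a b, γ t ∈ D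

/-- Quasihyperbolic length of the piece on `[a,b]` of an arclength-parametrized arc. -/
def qhLen (D : Set E) (γ : ℝ → E) (a b : ℝ) : ℝ := ∫ t in a..b, 1 / dB D (γ t)

/-- The quasihyperbolic distance in `D`: infimum of quasihyperbolic lengths of
arcs joining the two points. -/
def qhDist (D : Set E) (x y : E) : ℝ :=
  sInf { L : ℝ | ∃ T : ℝ, ∃ γ : ℝ → E,
    IsArc D γ 0 T ∧ γ 0 = x ∧ γ T = y ∧ L = qhLen D γ 0 T }

/-- `γ` is a `c`-quasigeodesic in `D` on `[a,b]`. -/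
def IsQuasigeodesicOn (D : Set E) (c : ℝ) (γ : ℝ → E) (a b : ℝ) : Prop :=
  IsArc D γ a b ∧ ∀ s t, s ∈ Set.Icc a b → t ∈ Set.Icc a b → s ≤ t →
    qhLen D γ s t ≤ c * qhDist D (γ s) (γ t)

/-- The coefficient `c_{x,y}^λ = min (1 + λ/(2 k_D(x,y))) (9/8)`. -/
def cLam (D : Set E) (lam : ℝ) (x y : E) : ℝ :=
  min (1 + lam / (2 * qhDist D x y)) (9 / 8)

/-- `γ` is a `λ`-curve in `D` on `[a,b]`: a `c_{x,y}^λ`-quasigeodesic where `x,y`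
are its endpoints. -/
def IsLamCurve (D : Set E) (lam : ℝ) (γ : ℝ → E) (a b : ℝ) : Prop :=
  IsQuasigeodesicOn D (cLam D lam (γ a) (γ b)) γ a b

/-- `γ` is `h`-short in `D`. -/
def IsShort (D : Set E) (h : ℝ) (γ : ℝ → E) (a b : ℝ) : Prop :=
  IsArc D γ a b ∧ ∀ s t, s ∈ Set.Icc a b → t ∈ Set.Icc a b → s ≤ t →
    qhLen D γ s t ≤ qhDist D (γ s) (γ t) + h

/-- The point `w` lies within quasihyperbolic distance `C` of the union of the
two given sides. -/
def WithinOfSides (D : Set E) (C : ℝ) (w : E) (α : ℝ → E) (a b : ℝ)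
    (α' : ℝ → E) (a' b' : ℝ) : Prop :=
  ∃ s : ℝ, (s ∈ Set.Icc a b ∧ qhDist D w (α s) ≤ C) ∨
    (s ∈ Set.Icc a' b' ∧ qhDist D w (α' s) ≤ C)

/-- `(D, k_D)` is a `(C,h)`-Rips space: every side of an `h`-short triangle lies
in the `C`-neighbourhood of the two other sides. -/
def IsRips (D : Set E) (C h : ℝ) : Prop :=
  ∀ (α₁ α₂ α₃ : ℝ → E) (a₁ b₁ a₂ b₂ a₃ b₃ : ℝ),
    IsShort D h α₁ a₁ b₁ → IsShort D h α₂ a₂ b₂ → IsShort D h α₃ a₃ b₃ →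
    α₁ b₁ = α₂ a₂ → α₂ b₂ = α₃ a₃ → α₃ b₃ = α₁ a₁ →
    (∀ t ∈ Set.Icc a₁ b₁, WithinOfSides D C (α₁ t) α₂ a₂ b₂ α₃ a₃ b₃) ∧
    (∀ t ∈ Set.Icc a₂ b₂, WithinOfSides D C (α₂ t) α₃ a₃ b₃ α₁ a₁ b₁) ∧
    (∀ t ∈ Set.Icc a₃ b₃, WithinOfSides D C (α₃ t) α₁ a₁ b₁ α₂ a₂ b₂)

/-- `D` is `δ`-Gromov hyperbolic with respect to the quasihyperbolic metric. -/
def IsGromovHyp (D : Set E) (δ : ℝ) : Prop :=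
  ∀ x ∈ D, ∀ y ∈ D, ∀ z ∈ D, ∀ p ∈ D,
    min ((qhDist D p x + qhDist D p y - qhDist D x y) / 2)
        ((qhDist D p y + qhDist D p z - qhDist D y z) / 2) - δ ≤
      (qhDist D p x + qhDist D p z - qhDist D x z) / 2

/-- `μ` is a thin-triangles constant for triangles of `c₀`-quasigeodesics in `D`. -/
def ThinTriangles (D : Set E) (c₀ μ : ℝ) : Prop :=
  ∀ (γ₁ γ₂ γ₃ : ℝ → E) (a₁ b₁ a₂ b₂ a₃ b₃ : ℝ),
    IsQuasigeodesicOn D c₀ γ₁ a₁ b₁ → IsQuasigeodesicOn D c₀ γ₂ a₂ b₂ →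
    IsQuasigeodesicOn D c₀ γ₃ a₃ b₃ →
    γ₁ b₁ = γ₂ a₂ → γ₂ b₂ = γ₃ a₃ → γ₃ b₃ = γ₁ a₁ →
    ∀ t ∈ Set.Icc a₁ b₁, WithinOfSides D μ (γ₁ t) γ₂ a₂ b₂ γ₃ a₃ b₃

/-- `D` is a `c`-uniform domain. -/
def IsUniform (D : Set E) (c : ℝ) : Prop :=
  ∀ z₁ ∈ D, ∀ z₂ ∈ D, ∃ γ : ℝ → E, ∃ a b : ℝ, IsArc D γ a b ∧ γ a = z₁ ∧ γ b = z₂ ∧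
    (∀ t ∈ Set.Icc a b, min (t - a) (b - t) ≤ c * dB D (γ t)) ∧
    b - a ≤ c * ‖z₁ - z₂‖

/-- `D` is an `a`-John domain. -/
def IsJohn (D : Set E) (a : ℝ) : Prop :=
  ∀ z₁ ∈ D, ∀ z₂ ∈ D, ∃ γ : ℝ → E, ∃ s t : ℝ, IsArc D γ s t ∧ γ s = z₁ ∧ γ t = z₂ ∧
    ∀ u ∈ Set.Icc s t, min (u - s) (t - u) ≤ a * dB D (γ u)

/-- The inner (length) distance in `D`. -/
def innerDist (D : Set E) (x y : E) : ℝ :=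
  sInf { L : ℝ | ∃ γ : ℝ → E, ∃ s t : ℝ, IsArc D γ s t ∧ γ s = x ∧ γ t = y ∧ L = t - s }

/-- `γ` is an inner `b`-uniform curve in `D`. -/
def IsInnerUniformCurve (D : Set E) (b : ℝ) (γ : ℝ → E) (s t : ℝ) : Prop :=
  (∀ u ∈ Set.Icc s t, min (u - s) (t - u) ≤ b * dB D (γ u)) ∧
  t - s ≤ b * innerDist D (γ s) (γ t)

/-- `D` is an inner `b`-uniform domain. -/
def IsInnerUniform (D : Set E) (b : ℝ) : Prop :=
  ∀ z₁ ∈ D, ∀ z₂ ∈ D, ∃ γ : ℝ → E, ∃ s t : ℝ,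
    IsArc D γ s t ∧ γ s = z₁ ∧ γ t = z₂ ∧ IsInnerUniformCurve D b γ s t

/-- Length (total variation) of a curve on `[a,b]`. -/
def lenOn {F : Type*} [NormedAddCommGroup F] (γ : ℝ → F) (a b : ℝ) : ℝ :=
  (eVariationOn γ (Set.Icc a b)).toReal

variable {F : Type*} [NormedAddCommGroup F]

/-- `f` is a homeomorphism from `D` onto `D'`. -/
def IsHomeoOn (f : E → F) (D : Set E) (D' : Set F) : Prop :=
  ∃ g : F → E, ContinuousOn f D ∧ ContinuousOn g D' ∧ Set.MapsTo f D D' ∧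
    Set.MapsTo g D' D ∧ (∀ x ∈ D, g (f x) = x) ∧ (∀ y ∈ D', f (g y) = y)

/-- `f : D → D'` is `(M,C)`-coarsely quasihyperbolic. -/
def IsCQH (f : E → F) (D : Set E) (D' : Set F) (M C : ℝ) : Prop :=
  ∀ x ∈ D, ∀ y ∈ D,
    (qhDist D x y - C) / M ≤ qhDist D' (f x) (f y) ∧
    qhDist D' (f x) (f y) ≤ M * qhDist D x y + C
section Aux

variable {E : Type*} [NormedAddCommGroup E]

/-- The defining set for `qhDist`. -/
def qhSet (D : Set E) (x y : E) : Set ℝ :=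
  { L : ℝ | ∃ T : ℝ, ∃ γ : ℝ → E,
    IsArc D γ 0 T ∧ γ 0 = x ∧ γ T = y ∧ L = qhLen D γ 0 T }

lemma qhDist_eq (D : Set E) (x y : E) : qhDist D x y = sInf (qhSet D x y) := rfl

lemma dB_nonneg (D : Set E) (z : E) : 0 ≤ dB D z := Metric.infDist_nonneg

lemma dB_pos {D : Set E} (hD : IsOpen D) (hne : Dᶜ.Nonempty) {z : E} (hz : z ∈ D) :
    0 < dB D z :=
  (hD.isClosed_compl.notMem_iff_infDist_pos hne).1 (fun h => h hz)

lemma qhLen_nonneg (D : Set E) (γ : ℝ → E) {a b : ℝ} (hab : a ≤ b) : 0 ≤ qhLen D γ a b := by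
  apply intervalIntegral.integral_nonneg hab
  intro u _
  exact div_nonneg zero_le_one (dB_nonneg D (γ u))

lemma qhSet_nonneg {D : Set E} {x y : E} {L : ℝ} (hL : L ∈ qhSet D x y) : 0 ≤ L := by
  obtain ⟨T, γ, hγ, -, -, rfl⟩ := hL
  exact qhLen_nonneg D γ hγ.le

lemma bddBelow_qhSet (D : Set E) (x y : E) : BddBelow (qhSet D x y) :=
  ⟨0, fun _ hL => qhSet_nonneg hL⟩

lemma qhDist_nonneg (D : Set E) (x y : E) : 0 ≤ qhDist D x y :=
  Real.sInf_nonneg fun _ h => qhSet_nonneg h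

lemma qhDist_le_of_mem {D : Set E} {x y : E} {L : ℝ} (hL : L ∈ qhSet D x y) :
    qhDist D x y ≤ L :=
  csInf_le (bddBelow_qhSet D x y) hL

/-- Derive the Lipschitz property from the unit-speed property. -/
lemma lipschitzOnWith_of_unit {γ : ℝ → E} {a b : ℝ}
    (unit : ∀ s t, s ∈ Set.Icc a b → t ∈ Set.Icc a b → s ≤ t →
      eVariationOn γ (Set.Icc s t) = ENNReal.ofReal (t - s)) :
    LipschitzOnWith 1 γ (Set.Icc a b) := by
  have key : ∀ s t, s ∈ Set.Icc a b → t ∈ Set.Icc a b → s ≤ t →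
      edist (γ s) (γ t) ≤ 1 * edist s t := by
    intro s t hs ht hst
    calc edist (γ s) (γ t) ≤ eVariationOn γ (Set.Icc s t) :=
          eVariationOn.edist_le γ ⟨le_rfl, hst⟩ ⟨hst, le_rfl⟩
      _ = ENNReal.ofReal (t - s) := unit s t hs ht hst
      _ ≤ 1 * edist s t := by
          rw [one_mul, edist_dist, Real.dist_eq]
          exact ENNReal.ofReal_le_ofReal (by rw [abs_sub_comm]; exact le_abs_self _)
  intro s hs t ht
  rcases le_total s t with h | h
  · exact key s t hs ht h
  · rw [edist_comm (γ s), edist_comm s]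
    exact key t s ht hs h

lemma integrand_contOn {D : Set E} (hD : IsOpen D) (hne : Dᶜ.Nonempty)
    {γ : ℝ → E} {a b : ℝ} (h : IsArc D γ a b) :
    ContinuousOn (fun t => 1 / dB D (γ t)) (Set.Icc a b) := by
  apply ContinuousOn.div continuousOn_const
  · exact (Metric.continuous_infDist_pt Dᶜ).comp_continuousOn h.lip.continuousOn
  · intro t ht
    exact ne_of_gt (dB_pos hD hne (h.mem t ht))

lemma intervalIntegrable_arc {D : Set E} (hD : IsOpen D) (hne : Dᶜ.Nonempty)
    {γ : ℝ → E} {a b : ℝ} (h : IsArc D γ a b) {s t : ℝ}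
    (hs : s ∈ Set.Icc a b) (ht : t ∈ Set.Icc a b) :
    IntervalIntegrable (fun u => 1 / dB D (γ u)) MeasureTheory.volume s t := by
  apply ContinuousOn.intervalIntegrable
  exact (integrand_contOn hD hne h).mono (Set.uIcc_subset_Icc hs ht)

lemma qhLen_add {D : Set E} (hD : IsOpen D) (hne : Dᶜ.Nonempty)
    {γ : ℝ → E} {a b : ℝ} (h : IsArc D γ a b) {s t u : ℝ}
    (hs : s ∈ Set.Icc a b) (ht : t ∈ Set.Icc a b) (hu : u ∈ Set.Icc a b) :
    qhLen D γ s t + qhLen D γ t u = qhLen D γ s u :=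
  intervalIntegral.integral_add_adjacent_intervals
    (intervalIntegrable_arc hD hne h hs ht) (intervalIntegrable_arc hD hne h ht hu)

lemma qhLen_mono {D : Set E} (hD : IsOpen D) (hne : Dᶜ.Nonempty)
    {γ : ℝ → E} {a b : ℝ} (h : IsArc D γ a b) {s t : ℝ}
    (hs : s ∈ Set.Icc a b) (ht : t ∈ Set.Icc a b) (hst : s ≤ t) :
    qhLen D γ s t ≤ qhLen D γ a b := by
  have hab : a ∈ Set.Icc a b := ⟨le_rfl, h.le⟩
  have hbb : b ∈ Set.Icc a b := ⟨h.le, le_rfl⟩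
  have e1 := qhLen_add hD hne h hab hs hbb
  have e2 := qhLen_add hD hne h hs ht hbb
  have n1 : 0 ≤ qhLen D γ a s := qhLen_nonneg D γ hs.1
  have n2 : 0 ≤ qhLen D γ t b := qhLen_nonneg D γ ht.2
  linarith

lemma evar_comp_add (γ : ℝ → E) (c u v : ℝ) :
    eVariationOn (fun x => γ (x + c)) (Set.Icc u v) =
      eVariationOn γ (Set.Icc (u + c) (v + c)) := by
  rw [show (fun x => γ (x + c)) = γ ∘ (fun x : ℝ => x + c) from rfl,
    eVariationOn.comp_eq_of_monotoneOn γ _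
      (fun x _ y _ hxy => by simpa using hxy : MonotoneOn (fun x : ℝ => x + c) (Set.Icc u v))]
  congr 1
  exact Set.image_add_const_Icc ..

lemma evar_comp_sub (γ : ℝ → E) (c u v : ℝ) :
    eVariationOn (fun x => γ (x - c)) (Set.Icc u v) =
      eVariationOn γ (Set.Icc (u - c) (v - c)) := by
  rw [show (fun x => γ (x - c)) = γ ∘ (fun x : ℝ => x - c) from rfl,
    eVariationOn.comp_eq_of_monotoneOn γ _
      (fun x _ y _ hxy => by simpa using hxy : MonotoneOn (fun x : ℝ => x - c) (Set.Icc u v))]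
  congr 1
  exact Set.image_sub_const_Icc ..

lemma evar_comp_const_sub (γ : ℝ → E) (c u v : ℝ) :
    eVariationOn (fun x => γ (c - x)) (Set.Icc u v) =
      eVariationOn γ (Set.Icc (c - v) (c - u)) := by
  rw [show (fun x => γ (c - x)) = γ ∘ (fun x : ℝ => c - x) from rfl,
    eVariationOn.comp_eq_of_antitoneOn γ _
      (fun x _ y _ hxy => sub_le_sub_left hxy c : AntitoneOn (fun x : ℝ => c - x) (Set.Icc u v))]
  congr 1
  exact Set.image_const_sub_Icc ..

lemma qhLen_shift (D : Set E) (γ : ℝ → E) (c u v : ℝ) :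
    qhLen D (fun x => γ (x + c)) u v = qhLen D γ (u + c) (v + c) :=
  intervalIntegral.integral_comp_add_right (fun x => 1 / dB D (γ x)) c

lemma qhLen_const_sub (D : Set E) (γ : ℝ → E) (c u v : ℝ) :
    qhLen D (fun x => γ (c - x)) u v = qhLen D γ (c - v) (c - u) :=
  intervalIntegral.integral_comp_sub_left (fun x => 1 / dB D (γ x)) c

lemma isArc_shift {D : Set E} {γ : ℝ → E} {a b : ℝ} (h : IsArc D γ a b) {s t : ℝ}
    (hs : s ∈ Set.Icc a b) (ht : t ∈ Set.Icc a b) (hst : s ≤ t) :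
    IsArc D (fun u => γ (u + s)) 0 (t - s) := by
  have unit : ∀ u v, u ∈ Set.Icc 0 (t - s) → v ∈ Set.Icc 0 (t - s) → u ≤ v →
      eVariationOn (fun x => γ (x + s)) (Set.Icc u v) = ENNReal.ofReal (v - u) := by
    intro u v hu hv huv
    rw [evar_comp_add, h.unit (u + s) (v + s)
      ⟨by linarith [hs.1, hu.1], by linarith [ht.2, hu.2]⟩
      ⟨by linarith [hs.1, hu.1, huv], by linarith [ht.2, hv.2]⟩ (by linarith)]
    congr 1
    ring
  exact ⟨by linarith, lipschitzOnWith_of_unit unit, unit,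
    fun u hu => h.mem _ ⟨by linarith [hs.1, hu.1], by linarith [ht.2, hu.2]⟩⟩

lemma isArc_restrict {D : Set E} {γ : ℝ → E} {a b : ℝ} (h : IsArc D γ a b) {s t : ℝ}
    (hs : s ∈ Set.Icc a b) (ht : t ∈ Set.Icc a b) (hst : s ≤ t) :
    IsArc D γ s t := by
  have hsub : Set.Icc s t ⊆ Set.Icc a b := Set.Icc_subset_Icc hs.1 ht.2
  exact ⟨hst, h.lip.mono hsub,
    fun u v hu hv huv => h.unit u v (hsub hu) (hsub hv) huv,
    fun u hu => h.mem u (hsub hu)⟩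

lemma isArc_reverse {D : Set E} {γ : ℝ → E} {a b : ℝ} (h : IsArc D γ a b) :
    IsArc D (fun u => γ (a + b - u)) a b := by
  have unit : ∀ u v, u ∈ Set.Icc a b → v ∈ Set.Icc a b → u ≤ v →
      eVariationOn (fun x => γ (a + b - x)) (Set.Icc u v) = ENNReal.ofReal (v - u) := by
    intro u v hu hv huv
    rw [evar_comp_const_sub, h.unit (a + b - v) (a + b - u)
      ⟨by linarith [hv.2], by linarith [hv.1]⟩
      ⟨by linarith [hu.2], by linarith [hu.1]⟩ (by linarith)]
    congr 1
    ring
  exact ⟨h.le, lipschitzOnWith_of_unit unit, unit,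
    fun u hu => h.mem _ ⟨by linarith [hu.2], by linarith [hu.1]⟩⟩

lemma subarc_mem {D : Set E} {γ : ℝ → E} {a b : ℝ} (h : IsArc D γ a b) {s t : ℝ}
    (hs : s ∈ Set.Icc a b) (ht : t ∈ Set.Icc a b) (hst : s ≤ t) :
    qhLen D γ s t ∈ qhSet D (γ s) (γ t) := by
  refine ⟨t - s, fun u => γ (u + s), isArc_shift h hs ht hst, by norm_num, by
    show γ (t - s + s) = γ t; congr 1; ring, ?_⟩
  rw [qhLen_shift]
  norm_num

lemma qhDist_le_qhLen {D : Set E} {γ : ℝ → E} {a b : ℝ} (h : IsArc D γ a b) {s t : ℝ}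
    (hs : s ∈ Set.Icc a b) (ht : t ∈ Set.Icc a b) (hst : s ≤ t) :
    qhDist D (γ s) (γ t) ≤ qhLen D γ s t :=
  qhDist_le_of_mem (subarc_mem h hs ht hst)

lemma qhSet_symm_subset (D : Set E) (x y : E) : qhSet D x y ⊆ qhSet D y x := by
  rintro L ⟨T, γ, hγ, rfl, rfl, rfl⟩
  have harc := isArc_reverse hγ
  refine ⟨T, fun u => γ (0 + T - u), by simpa using harc, by norm_num, by norm_num, ?_⟩
  rw [show (fun u => γ (0 + T - u)) = (fun u => γ (T - u)) from by funext u; ring_nf,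
    qhLen_const_sub]
  norm_num

lemma qhSet_symm (D : Set E) (x y : E) : qhSet D x y = qhSet D y x :=
  Set.Subset.antisymm (qhSet_symm_subset D x y) (qhSet_symm_subset D y x)

lemma qhDist_symm (D : Set E) (x y : E) : qhDist D x y = qhDist D y x :=
  congrArg sInf (qhSet_symm D x y)

end Aux
section Aux2

variable {E : Type*} [NormedAddCommGroup E]

lemma concat_mem {D : Set E} (hD : IsOpen D) (hne : Dᶜ.Nonempty) {x y z : E} {L₁ L₂ : ℝ}
    (h₁ : L₁ ∈ qhSet D x y) (h₂ : L₂ ∈ qhSet D y z) : L₁ + L₂ ∈ qhSet D x z := by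
  obtain ⟨S, γ, hγ, hγ0, hγS, rfl⟩ := h₁
  obtain ⟨T, δ, hδ, hδ0, hδT, rfl⟩ := h₂
  set η : ℝ → E := fun u => if u ≤ S then γ u else δ (u - S) with hηdef
  have hS : 0 ≤ S := hγ.le
  have hT : 0 ≤ T := hδ.le
  have hmatch : γ S = δ 0 := by rw [hγS, hδ0]
  have hEq1 : Set.EqOn η γ (Set.Icc 0 S) := fun u hu => if_pos hu.2
  have hEq2 : Set.EqOn η (fun u => δ (u - S)) (Set.Icc S (S + T)) := by
    intro u hu
    by_cases h : u ≤ S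
    · have hu' : u = S := le_antisymm h hu.1
      simp only [hηdef, hu', if_pos le_rfl, sub_self, hmatch]
    · simp only [hηdef, if_neg h]
  have piece1 : ∀ u v : ℝ, 0 ≤ u → u ≤ v → v ≤ S →
      eVariationOn η (Set.Icc u v) = ENNReal.ofReal (v - u) := by
    intro u v h0 huv hvS
    rw [eVariationOn.eq_of_eqOn (hEq1.mono (Set.Icc_subset_Icc h0 hvS))]
    exact hγ.unit u v ⟨h0, huv.trans hvS⟩ ⟨h0.trans huv, hvS⟩ huv
  have piece2 : ∀ u v : ℝ, S ≤ u → u ≤ v → v ≤ S + T →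
      eVariationOn η (Set.Icc u v) = ENNReal.ofReal (v - u) := by
    intro u v hSu huv hvT
    rw [eVariationOn.eq_of_eqOn (hEq2.mono (Set.Icc_subset_Icc hSu hvT)), evar_comp_sub,
      hδ.unit (u - S) (v - S) ⟨by linarith, by linarith⟩ ⟨by linarith, by linarith⟩
        (by linarith)]
    congr 1
    ring
  have unit : ∀ u v, u ∈ Set.Icc 0 (S + T) → v ∈ Set.Icc 0 (S + T) → u ≤ v →
      eVariationOn η (Set.Icc u v) = ENNReal.ofReal (v - u) := by
    intro u v hu hv huv
    rcases le_total v S with hvS | hSv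
    · exact piece1 u v hu.1 huv hvS
    rcases le_total S u with hSu | huS
    · exact piece2 u v hSu huv hv.2
    have key := eVariationOn.Icc_add_Icc η (a := u) (b := S) (c := v)
      huS hSv ⟨huS, hSv⟩ (s := Set.Icc u v)
    rw [Set.inter_eq_self_of_subset_right (Set.Icc_subset_Icc le_rfl hSv),
      Set.inter_eq_self_of_subset_right (Set.Icc_subset_Icc huS le_rfl),
      Set.inter_self] at key
    rw [← key, piece1 u S hu.1 huS le_rfl, piece2 S v le_rfl hSv hv.2,
      ← ENNReal.ofReal_add (by linarith) (by linarith)]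
    congr 1
    ring
  have hmem : ∀ u ∈ Set.Icc 0 (S + T), η u ∈ D := by
    intro u hu
    by_cases h : u ≤ S
    · simpa only [hηdef, if_pos h] using hγ.mem u ⟨hu.1, h⟩
    · have : u - S ∈ Set.Icc 0 T := ⟨by linarith [not_le.1 h], by linarith [hu.2]⟩
      simpa only [hηdef, if_neg h] using hδ.mem (u - S) this
  have harc : IsArc D η 0 (S + T) :=
    ⟨by linarith, lipschitzOnWith_of_unit unit, unit, hmem⟩
  have hend0 : η 0 = x := by rw [← hγ0]; exact hEq1 ⟨le_rfl, hS⟩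
  have hendT : η (S + T) = z := by
    rw [← hδT]
    have := hEq2 ⟨by linarith, le_rfl⟩
    rw [this]
    congr 1
    ring
  have hlen : qhLen D γ 0 S + qhLen D δ 0 T = qhLen D η 0 (S + T) := by
    have i1 : qhLen D η 0 S = qhLen D γ 0 S := by
      apply intervalIntegral.integral_congr
      intro u hu
      rw [Set.uIcc_of_le hS] at hu
      simp only [hEq1 hu]
    have i2 : qhLen D η S (S + T) = qhLen D δ 0 T := by
      have : qhLen D η S (S + T) = ∫ u in S..(S + T), 1 / dB D (δ (u - S)) := by
        apply intervalIntegral.integral_congr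
        intro u hu
        rw [Set.uIcc_of_le (by linarith : S ≤ S + T)] at hu
        simp only [hEq2 hu]
      rw [this, intervalIntegral.integral_comp_sub_right (fun u => 1 / dB D (δ u)) S]
      simp [qhLen]
    have := qhLen_add hD hne harc (s := 0) (t := S) (u := S + T)
      ⟨le_rfl, by linarith⟩ ⟨hS, by linarith⟩ ⟨by linarith, le_rfl⟩
    rw [i1, i2] at this
    exact this
  exact ⟨S + T, η, harc, hend0, hendT, hlen⟩

lemma qhDist_triangle {D : Set E} (hD : IsOpen D) (hne : Dᶜ.Nonempty) {x y z : E}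
    (h₁ : (qhSet D x y).Nonempty) (h₂ : (qhSet D y z).Nonempty) :
    qhDist D x z ≤ qhDist D x y + qhDist D y z := by
  refine le_of_forall_pos_le_add fun ε hε => ?_
  obtain ⟨L₁, hL₁, hL₁'⟩ := Real.lt_sInf_add_pos h₁ (half_pos hε)
  obtain ⟨L₂, hL₂, hL₂'⟩ := Real.lt_sInf_add_pos h₂ (half_pos hε)
  have h3 := qhDist_le_of_mem (concat_mem hD hne hL₁ hL₂)
  rw [qhDist_eq D x y, qhDist_eq D y z]
  linarith

/-- Subarcs of `λ`-curves are `λ`-short. -/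
lemma lamCurve_short {D : Set E} (hD : IsOpen D) (hne : Dᶜ.Nonempty) {lam : ℝ}
    (hlam₀ : 0 < lam) {γ : ℝ → E} {a b : ℝ} (h : IsLamCurve D lam γ a b) {s t : ℝ}
    (hs : s ∈ Set.Icc a b) (ht : t ∈ Set.Icc a b) (hst : s ≤ t) :
    qhLen D γ s t ≤ qhDist D (γ s) (γ t) + lam := by
  obtain ⟨harc, hqg⟩ := h
  set c := cLam D lam (γ a) (γ b) with hc
  set K := qhDist D (γ a) (γ b) with hK
  set d := qhDist D (γ s) (γ t) with hd
  have hd0 : 0 ≤ d := qhDist_nonneg D _ _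
  have hK0 : 0 ≤ K := qhDist_nonneg D _ _
  have h1 : qhLen D γ s t ≤ c * d := hqg s t hs ht hst
  have hdle : d ≤ qhLen D γ s t := qhDist_le_qhLen harc hs ht hst
  have h2 : qhLen D γ s t ≤ qhLen D γ a b := qhLen_mono hD hne harc hs ht hst
  have h3 : qhLen D γ a b ≤ c * K :=
    hqg a b ⟨le_rfl, harc.le⟩ ⟨harc.le, le_rfl⟩ harc.le
  have hc98 : c ≤ 9 / 8 := min_le_right _ _
  have hc1 : c ≤ 1 + lam / (2 * K) := min_le_left _ _
  rcases eq_or_lt_of_le hK0 with h0 | h0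
  · have hdiv : lam / (2 * K) = 0 := by rw [← h0]; simp
    have hcle : c ≤ 1 := by rw [hdiv, add_zero] at hc1; exact hc1
    nlinarith
  · have hdK : d ≤ 9 / 8 * K := by nlinarith
    have hmul : (c - 1) * d ≤ lam / (2 * K) * (9 / 8 * K) := by
      apply mul_le_mul (by linarith) hdK hd0
      positivity
    have heq : lam / (2 * K) * (9 / 8 * K) = 9 / 16 * lam := by
      field_simp
      ring
    nlinarith

end Aux2

/-- In a `(μ₀,ρ₀)`-Rips space, if two `λ`-curves emanate from a
common point `x`, with endpoints `y` (on `γ₁`) and `z` (on `γ₂`) satisfying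
`k_D(y,z) ≤ τ`, then every point of `γ₁[x,y]` lies within `μ₀ + 2λ + τ` of
`γ₂[x,z]`. -/
theorem stmt8 [NormedSpace ℝ E] [CompleteSpace E]
    (D : Set E) (hD : IsProperDomain D) (μ₀ ρ₀ lam τ : ℝ)
    (hlam₀ : 0 < lam) (hlam₁ : lam ≤ 1 / 2) (hlamρ : lam ≤ ρ₀)
    (hRips : IsRips D μ₀ ρ₀)
    (γ₁ : ℝ → E) (a₁ b₁ : ℝ) (hγ₁ : IsLamCurve D lam γ₁ a₁ b₁)
    (γ₂ : ℝ → E) (a₂ b₂ : ℝ) (hγ₂ : IsLamCurve D lam γ₂ a₂ b₂)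
    (s₁ t₁ s₂ t₂ : ℝ)
    (hs₁ : s₁ ∈ Set.Icc a₁ b₁) (ht₁ : t₁ ∈ Set.Icc a₁ b₁) (h₁ : s₁ ≤ t₁)
    (hs₂ : s₂ ∈ Set.Icc a₂ b₂) (ht₂ : t₂ ∈ Set.Icc a₂ b₂) (h₂ : s₂ ≤ t₂)
    (hx : γ₁ s₁ = γ₂ s₂)
    (hτ : qhDist D (γ₁ t₁) (γ₂ t₂) ≤ τ) :
    ∀ w ∈ Set.Icc s₁ t₁, ∃ u ∈ Set.Icc s₂ t₂,
      qhDist D (γ₁ w) (γ₂ u) ≤ μ₀ + 2 * lam + τ := by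
  obtain ⟨hDo, -, hne⟩ := hD
  have harc₁ : IsArc D γ₁ a₁ b₁ := hγ₁.1
  have harc₂ : IsArc D γ₂ a₂ b₂ := hγ₂.1
  -- side 1 : γ₁ on [s₁,t₁], from x to y
  have short₁ : IsShort D ρ₀ γ₁ s₁ t₁ := by
    refine ⟨isArc_restrict harc₁ hs₁ ht₁ h₁, ?_⟩
    intro u v hu hv huv
    have hu' : u ∈ Set.Icc a₁ b₁ := Set.Icc_subset_Icc hs₁.1 ht₁.2 hu
    have hv' : v ∈ Set.Icc a₁ b₁ := Set.Icc_subset_Icc hs₁.1 ht₁.2 hv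
    have := lamCurve_short hDo hne hlam₀ hγ₁ hu' hv' huv
    linarith
  -- side 3 : reversed γ₂ on [s₂,t₂], from z to x
  set ρ : ℝ → E := fun u => γ₂ (s₂ + t₂ - u) with hρdef
  have harcρ : IsArc D ρ s₂ t₂ := isArc_reverse (isArc_restrict harc₂ hs₂ ht₂ h₂)
  have short₃ : IsShort D ρ₀ ρ s₂ t₂ := by
    refine ⟨harcρ, ?_⟩
    intro u v hu hv huv
    have e : qhLen D ρ u v = qhLen D γ₂ (s₂ + t₂ - v) (s₂ + t₂ - u) :=
      qhLen_const_sub D γ₂ (s₂ + t₂) u v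
    have hv' : s₂ + t₂ - v ∈ Set.Icc a₂ b₂ :=
      ⟨by linarith [hs₂.1, hv.2], by linarith [ht₂.2, hv.1]⟩
    have hu' : s₂ + t₂ - u ∈ Set.Icc a₂ b₂ :=
      ⟨by linarith [hs₂.1, hu.2], by linarith [ht₂.2, hu.1]⟩
    have hls := lamCurve_short hDo hne hlam₀ hγ₂ hv' hu' (by linarith)
    have hsym : qhDist D (γ₂ (s₂ + t₂ - v)) (γ₂ (s₂ + t₂ - u)) = qhDist D (ρ u) (ρ v) := by
      rw [show γ₂ (s₂ + t₂ - v) = ρ v from rfl, show γ₂ (s₂ + t₂ - u) = ρ u from rfl,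
        qhDist_symm]
    rw [e]
    rw [hsym] at hls
    linarith
  -- side 2 : a near-geodesic from y to z
  have hm1 : qhLen D γ₁ s₁ t₁ ∈ qhSet D (γ₁ t₁) (γ₁ s₁) :=
    qhSet_symm_subset D _ _ (subarc_mem harc₁ hs₁ ht₁ h₁)
  have hm2 : qhLen D γ₂ s₂ t₂ ∈ qhSet D (γ₂ s₂) (γ₂ t₂) := subarc_mem harc₂ hs₂ ht₂ h₂
  rw [← hx] at hm2
  have hne_yz : (qhSet D (γ₁ t₁) (γ₂ t₂)).Nonempty := ⟨_, concat_mem hDo hne hm1 hm2⟩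
  obtain ⟨L, hL, hLlt⟩ := Real.lt_sInf_add_pos hne_yz hlam₀
  rw [← qhDist_eq] at hLlt
  obtain ⟨T, α, hα, hα0, hαT, rfl⟩ := hL
  have h0T : (0 : ℝ) ∈ Set.Icc 0 T := ⟨le_rfl, hα.le⟩
  have hTT : T ∈ Set.Icc 0 T := ⟨hα.le, le_rfl⟩
  have hlen : qhLen D α 0 T ≤ qhDist D (γ₁ t₁) (γ₂ t₂) + lam := le_of_lt hLlt
  have short₂ : IsShort D ρ₀ α 0 T := by
    refine ⟨hα, ?_⟩
    intro u v hu hv huv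
    have e1 : qhLen D α 0 u + qhLen D α u T = qhLen D α 0 T := qhLen_add hDo hne hα h0T hu hTT
    have e2 : qhLen D α u v + qhLen D α v T = qhLen D α u T := qhLen_add hDo hne hα hu hv hTT
    have d1 : qhDist D (γ₁ t₁) (α u) ≤ qhLen D α 0 u := by
      rw [← hα0]; exact qhDist_le_qhLen hα h0T hu hu.1
    have d2 : qhDist D (α v) (γ₂ t₂) ≤ qhLen D α v T := by
      rw [← hαT]; exact qhDist_le_qhLen hα hv hTT hv.2
    have ne1 : (qhSet D (γ₁ t₁) (α u)).Nonempty := by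
      rw [← hα0]; exact ⟨_, subarc_mem hα h0T hu hu.1⟩
    have ne2 : (qhSet D (α u) (α v)).Nonempty := ⟨_, subarc_mem hα hu hv huv⟩
    have ne3 : (qhSet D (α v) (γ₂ t₂)).Nonempty := by
      rw [← hαT]; exact ⟨_, subarc_mem hα hv hTT hv.2⟩
    have ne4 : (qhSet D (α u) (γ₂ t₂)).Nonempty := by
      rw [← hαT]; exact ⟨_, subarc_mem hα hu hTT hu.2⟩
    have tri1 : qhDist D (γ₁ t₁) (γ₂ t₂) ≤
        qhDist D (γ₁ t₁) (α u) + qhDist D (α u) (γ₂ t₂) := qhDist_triangle hDo hne ne1 ne4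
    have tri2 : qhDist D (α u) (γ₂ t₂) ≤
        qhDist D (α u) (α v) + qhDist D (α v) (γ₂ t₂) := qhDist_triangle hDo hne ne2 ne3
    linarith
  -- the triangle and the Rips condition
  have match1 : γ₁ t₁ = α 0 := hα0.symm
  have match2 : α T = ρ s₂ := by
    rw [hαT]; show γ₂ t₂ = γ₂ (s₂ + t₂ - s₂); congr 1; ring
  have match3 : ρ t₂ = γ₁ s₁ := by
    show γ₂ (s₂ + t₂ - t₂) = γ₁ s₁; rw [hx]; congr 1; ring
  have H := (hRips γ₁ α ρ s₁ t₁ 0 T s₂ t₂ short₁ short₂ short₃ match1 match2 match3).1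
  intro w hw
  have hkyz : 0 ≤ qhDist D (γ₁ t₁) (γ₂ t₂) := qhDist_nonneg D _ _
  obtain ⟨s, hcase⟩ := H w hw
  rcases hcase with ⟨hsmem, hdist⟩ | ⟨hsmem, hdist⟩
  · -- the nearby point is on the near-geodesic α; use u = t₂
    refine ⟨t₂, ⟨h₂, le_rfl⟩, ?_⟩
    have hw' : w ∈ Set.Icc a₁ b₁ := ⟨hs₁.1.trans hw.1, hw.2.trans ht₁.2⟩
    have m1 : qhLen D γ₁ w t₁ ∈ qhSet D (γ₁ w) (γ₁ t₁) := subarc_mem harc₁ hw' ht₁ hw.2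
    have m2 : qhLen D α 0 s ∈ qhSet D (α 0) (α s) := subarc_mem hα h0T hsmem hsmem.1
    rw [hα0] at m2
    have ne5 : (qhSet D (γ₁ w) (α s)).Nonempty := ⟨_, concat_mem hDo hne m1 m2⟩
    have ne6 : (qhSet D (α s) (γ₂ t₂)).Nonempty := by
      rw [← hαT]; exact ⟨_, subarc_mem hα hsmem hTT hsmem.2⟩
    have tri := qhDist_triangle hDo hne ne5 ne6
    have dz : qhDist D (α s) (γ₂ t₂) ≤ qhLen D α s T := by
      rw [← hαT]; exact qhDist_le_qhLen hα hsmem hTT hsmem.2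
    have mono : qhLen D α s T ≤ qhLen D α 0 T := by
      have e := qhLen_add hDo hne hα h0T hsmem hTT
      have n := qhLen_nonneg D α hsmem.1
      linarith
    linarith
  · -- the nearby point is on the reversed curve ρ
    refine ⟨s₂ + t₂ - s, ⟨by linarith [hsmem.2], by linarith [hsmem.1]⟩, ?_⟩
    have : γ₂ (s₂ + t₂ - s) = ρ s := rfl
    rw [this]
    linarith

end
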